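/- arXiv:2510.26066 — 2 statements merged into one kernel-verified Lean document; each statement's English description precedes it below -/
import Mathlib

section
/- Let P, P_n (n ≥ 1) be weakly compact convex sets of probability measures on a Polish space. If KL(P_n‖P) + KL(P‖P_n) → 0 as n → ∞, then V(P_n,P) → 0 and JS(P_n,P) → 0. -/
open MeasureTheory Real ENNReal Filter Topology
open scoped Classical

noncomputable def klDiv {X : Type*} [MeasurableSpace X] (μ ν : Measure X) : EReal :=
  if μ ≪ ν ∧ Integrable (fun x => Real.log (μ.rnDeriv ν x).toReal) μ
  then ((∫ x, Real.log (μ.rnDeriv ν x).toReal ∂μ : ℝ) : EReal)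
  else ⊤

noncomputable def tvDist {X : Type*} [MeasurableSpace X] (μ ν : Measure X) : ℝ :=
  ⨆ A : {A : Set X // MeasurableSet A}, |(μ A).toReal - (ν A).toReal|


noncomputable def genKL {X : Type*} [MeasurableSpace X]
    (P Q : Set (ProbabilityMeasure X)) : EReal :=
  ⨆ μ ∈ P, ⨅ ν ∈ Q, klDiv μ.toMeasure ν.toMeasure

noncomputable def genV {X : Type*} [MeasurableSpace X]
    (P Q : Set (ProbabilityMeasure X)) : ℝ :=
  max (⨆ μ : P, ⨅ ν : Q, tvDist μ.1.toMeasure ν.1.toMeasure)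
      (⨆ ν : Q, ⨅ μ : P, tvDist μ.1.toMeasure ν.1.toMeasure)

def ConvexPM {X : Type*} [MeasurableSpace X] (P : Set (ProbabilityMeasure X)) : Prop :=
  ∀ μ ∈ P, ∀ ν ∈ P, ∀ a b : ℝ≥0∞, a + b = 1 →
    ∃ κ ∈ P, κ.toMeasure = a • μ.toMeasure + b • ν.toMeasure

def midSet {X : Type*} [MeasurableSpace X]
    (P Q : Set (ProbabilityMeasure X)) : Set (ProbabilityMeasure X) :=
  {κ | ∃ μ ∈ P, ∃ ν ∈ Q, κ.toMeasure = (2:ℝ≥0∞)⁻¹ • μ.toMeasure + (2:ℝ≥0∞)⁻¹ • ν.toMeasure}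

noncomputable def genJS {X : Type*} [MeasurableSpace X]
    (P Q : Set (ProbabilityMeasure X)) : EReal :=
  ((1/2 : ℝ) : EReal) * genKL P (midSet P Q) + ((1/2 : ℝ) : EReal) * genKL Q (midSet P Q)



section Aux

lemma aux_sq_le (x : ℝ) (hx : 0 ≤ x) :
    (Real.sqrt x - 1) ^ 2 ≤ x * Real.log x - x + 1 := by
  rcases eq_or_lt_of_le hx with h | h
  · simp [← h]
  · have hs : 0 < Real.sqrt x := Real.sqrt_pos.2 h
    have h1 : Real.log (Real.sqrt x)⁻¹ ≤ (Real.sqrt x)⁻¹ - 1 :=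
      Real.log_le_sub_one_of_pos (by positivity)
    rw [Real.log_inv] at h1
    have h2 : Real.log (Real.sqrt x) = Real.log x / 2 := Real.log_sqrt hx
    have h3 : Real.sqrt x * Real.sqrt x = x := Real.mul_self_sqrt hx
    -- log x ≥ 2 - 2/√x, so x log x ≥ 2x - 2√x
    have h4 : 1 - (Real.sqrt x)⁻¹ ≤ Real.log x / 2 := by linarith
    have h5 : (Real.sqrt x)⁻¹ * Real.sqrt x = 1 := inv_mul_cancel₀ hs.ne'
    have h6 : x * (1 - (Real.sqrt x)⁻¹) ≤ x * (Real.log x / 2) :=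
      mul_le_mul_of_nonneg_left h4 hx
    have h7 : x * (Real.sqrt x)⁻¹ = Real.sqrt x := by
      field_simp [h3]
      exact (Real.sq_sqrt hx).symm
    nlinarith [h6, h7]


variable {α : Type*} [MeasurableSpace α] {μ ν : Measure α}

lemma kl_eq_int [IsProbabilityMeasure μ] [SigmaFinite ν] (hμν : μ ≪ ν)
    : ∫ x, Real.log (μ.rnDeriv ν x).toReal ∂μ
    = ∫ x, (μ.rnDeriv ν x).toReal * Real.log (μ.rnDeriv ν x).toReal ∂ν := by
  rw [← MeasureTheory.integral_rnDeriv_smul hμν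
    (f := fun x => Real.log (μ.rnDeriv ν x).toReal)]
  simp [smul_eq_mul]

lemma int_f_eq_one [IsProbabilityMeasure μ] [SigmaFinite ν] (hμν : μ ≪ ν) :
    ∫ x, (μ.rnDeriv ν x).toReal ∂ν = 1 := by
  rw [Measure.integral_toReal_rnDeriv hμν]; simp

lemma integrable_f [IsFiniteMeasure μ] : Integrable (fun x => (μ.rnDeriv ν x).toReal) ν :=
  Measure.integrable_toReal_rnDeriv

lemma integrable_flogf [SigmaFinite μ] [SigmaFinite ν] (hμν : μ ≪ ν)
    (hint : Integrable (fun x => Real.log (μ.rnDeriv ν x).toReal) μ) :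
    Integrable (fun x => (μ.rnDeriv ν x).toReal * Real.log (μ.rnDeriv ν x).toReal) ν := by
  have := (MeasureTheory.integrable_rnDeriv_smul_iff hμν
    (f := fun x => Real.log (μ.rnDeriv ν x).toReal)).2 hint
  simpa [smul_eq_mul] using this

lemma integrable_sqrtf [IsFiniteMeasure μ] [IsFiniteMeasure ν] :
    Integrable (fun x => Real.sqrt (μ.rnDeriv ν x).toReal) ν := by
  refine Integrable.mono' ((integrable_f (μ := μ)).add (integrable_const (1:ℝ)))
    (Measurable.aestronglyMeasurable (by fun_prop)) ?_
  refine Filter.Eventually.of_forall fun x => ?_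
  have h0 : (0:ℝ) ≤ (μ.rnDeriv ν x).toReal := ENNReal.toReal_nonneg
  rw [Real.norm_eq_abs, abs_of_nonneg (Real.sqrt_nonneg _)]
  simp only [Pi.add_apply]
  nlinarith [Real.sq_sqrt h0, Real.sqrt_nonneg (μ.rnDeriv ν x).toReal,
    sq_nonneg (Real.sqrt (μ.rnDeriv ν x).toReal - 1)]

lemma integrable_hell [IsFiniteMeasure μ] [IsFiniteMeasure ν] :
    Integrable (fun x => (Real.sqrt (μ.rnDeriv ν x).toReal - 1) ^ 2) ν := by
  have h1 : Integrable (fun x => (μ.rnDeriv ν x).toReal) ν := integrable_f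
  have h2 : Integrable (fun x => Real.sqrt (μ.rnDeriv ν x).toReal) ν := integrable_sqrtf
  have h3 : Integrable (fun x => (μ.rnDeriv ν x).toReal
      - 2 * Real.sqrt (μ.rnDeriv ν x).toReal + 1) ν :=
    (h1.sub (h2.const_mul 2)).add (integrable_const 1)
  refine h3.congr (Filter.Eventually.of_forall fun x => ?_)
  have h0 : (0:ℝ) ≤ (μ.rnDeriv ν x).toReal := ENNReal.toReal_nonneg
  simp only
  rw [sub_sq, Real.sq_sqrt h0]; ring

lemma hell_le_kl [IsProbabilityMeasure μ] [IsProbabilityMeasure ν] (hμν : μ ≪ ν)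
    (hint : Integrable (fun x => Real.log (μ.rnDeriv ν x).toReal) μ) :
    ∫ x, (Real.sqrt (μ.rnDeriv ν x).toReal - 1) ^ 2 ∂ν
    ≤ ∫ x, Real.log (μ.rnDeriv ν x).toReal ∂μ := by
  rw [kl_eq_int hμν]
  have heq : ∫ x, (μ.rnDeriv ν x).toReal * Real.log (μ.rnDeriv ν x).toReal ∂ν
      = ∫ x, ((μ.rnDeriv ν x).toReal * Real.log (μ.rnDeriv ν x).toReal
        - (μ.rnDeriv ν x).toReal + 1) ∂ν := by
    have h4 : Integrable (fun x => (μ.rnDeriv ν x).toReal * Real.log (μ.rnDeriv ν x).toReal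
        - (μ.rnDeriv ν x).toReal) ν := (integrable_flogf hμν hint).sub (integrable_f (μ:=μ))
    rw [integral_add h4 (integrable_const 1),
      integral_sub (integrable_flogf hμν hint) (integrable_f (μ:=μ)), int_f_eq_one hμν]
    simp
  rw [heq]
  refine integral_mono (integrable_hell (μ:=μ))
    (((integrable_flogf hμν hint).sub (integrable_f (μ:=μ))).add (integrable_const 1)) fun x => ?_
  exact aux_sq_le _ ENNReal.toReal_nonneg

lemma kl_nonneg [IsProbabilityMeasure μ] [IsProbabilityMeasure ν] (hμν : μ ≪ ν)
    (hint : Integrable (fun x => Real.log (μ.rnDeriv ν x).toReal) μ) :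
    0 ≤ ∫ x, Real.log (μ.rnDeriv ν x).toReal ∂μ :=
  le_trans (integral_nonneg fun _ => sq_nonneg _) (hell_le_kl hμν hint)


lemma integrable_gsq [IsProbabilityMeasure μ] [IsProbabilityMeasure ν] :
    Integrable (fun x => (Real.sqrt (μ.rnDeriv ν x).toReal + 1) ^ 2) ν := by
  have h3 : Integrable (fun x => (μ.rnDeriv ν x).toReal
      + 2 * Real.sqrt (μ.rnDeriv ν x).toReal + 1) ν :=
    ((integrable_f (μ:=μ)).add ((integrable_sqrtf (μ:=μ)).const_mul 2)).add (integrable_const 1)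
  refine h3.congr (Filter.Eventually.of_forall fun x => ?_)
  simp only
  rw [add_sq, Real.sq_sqrt ENNReal.toReal_nonneg]; ring

lemma int_gsq_le [IsProbabilityMeasure μ] [IsProbabilityMeasure ν] (hμν : μ ≪ ν) :
    ∫ x, (Real.sqrt (μ.rnDeriv ν x).toReal + 1) ^ 2 ∂ν ≤ 4 := by
  have h3 : Integrable (fun x => 2 * (μ.rnDeriv ν x).toReal + 2) ν :=
    ((integrable_f (μ:=μ)).const_mul 2).add (integrable_const 2)
  have hle : ∫ x, (Real.sqrt (μ.rnDeriv ν x).toReal + 1) ^ 2 ∂ν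
      ≤ ∫ x, (2 * (μ.rnDeriv ν x).toReal + 2) ∂ν := by
    refine integral_mono (integrable_gsq (μ:=μ)) h3 fun x => ?_
    have h0 : (0:ℝ) ≤ (μ.rnDeriv ν x).toReal := ENNReal.toReal_nonneg
    nlinarith [Real.sq_sqrt h0, sq_nonneg (Real.sqrt (μ.rnDeriv ν x).toReal - 1)]
  have : ∫ x, (2 * (μ.rnDeriv ν x).toReal + 2) ∂ν = 4 := by
    rw [integral_add ((integrable_f (μ:=μ)).const_mul 2) (integrable_const 2),
      integral_const_mul, int_f_eq_one hμν]
    simp; norm_num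
  linarith

lemma integral_abs_fsub_le [IsProbabilityMeasure μ] [IsProbabilityMeasure ν] (hμν : μ ≪ ν)
    (hint : Integrable (fun x => Real.log (μ.rnDeriv ν x).toReal) μ) :
    ∫ x, |(μ.rnDeriv ν x).toReal - 1| ∂ν
    ≤ 2 * Real.sqrt (∫ x, Real.log (μ.rnDeriv ν x).toReal ∂μ) := by
  set I := ∫ x, Real.log (μ.rnDeriv ν x).toReal ∂μ with hIdef
  have hI : 0 ≤ I := kl_nonneg hμν hint
  have key : ∀ c : ℝ, 0 < c → ∫ x, |(μ.rnDeriv ν x).toReal - 1| ∂ν ≤ I / (2 * c) + 2 * c := by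
    intro c hc
    have hpt : ∀ x, |(μ.rnDeriv ν x).toReal - 1|
        ≤ (1 / (2 * c)) * (Real.sqrt (μ.rnDeriv ν x).toReal - 1) ^ 2
          + (c / 2) * (Real.sqrt (μ.rnDeriv ν x).toReal + 1) ^ 2 := by
      intro x
      have h0 : (0:ℝ) ≤ (μ.rnDeriv ν x).toReal := ENNReal.toReal_nonneg
      have hsq : Real.sqrt (μ.rnDeriv ν x).toReal * Real.sqrt (μ.rnDeriv ν x).toReal
          = (μ.rnDeriv ν x).toReal := Real.mul_self_sqrt h0
      set a := Real.sqrt (μ.rnDeriv ν x).toReal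
      have ha : 0 ≤ a := Real.sqrt_nonneg _
      have hfact : (μ.rnDeriv ν x).toReal - 1 = (a - 1) * (a + 1) := by rw [← hsq]; ring
      rw [hfact, abs_mul, abs_of_nonneg (by linarith : (0:ℝ) ≤ a + 1)]
      have gen : ∀ X Y : ℝ, X * Y ≤ 1 / (2 * c) * X ^ 2 + c / 2 * Y ^ 2 := by
        intro X Y
        have hexp : 1 / (2 * c) * (X - c * Y) ^ 2
            = 1 / (2 * c) * X ^ 2 - X * Y + c / 2 * Y ^ 2 := by
          field_simp
          ring
        have hnn : 0 ≤ 1 / (2 * c) * (X - c * Y) ^ 2 := by positivity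
        linarith [hexp ▸ hnn]
      have hAMGM := gen |a - 1| (a + 1)
      calc |a - 1| * (a + 1) ≤ (1 / (2 * c)) * |a - 1| ^ 2 + (c / 2) * (a + 1) ^ 2 := hAMGM
        _ = (1 / (2 * c)) * (a - 1) ^ 2 + (c / 2) * (a + 1) ^ 2 := by rw [sq_abs]
    have hint1 : Integrable (fun x => (1 / (2 * c)) * (Real.sqrt (μ.rnDeriv ν x).toReal - 1) ^ 2
        + (c / 2) * (Real.sqrt (μ.rnDeriv ν x).toReal + 1) ^ 2) ν :=
      ((integrable_hell (μ:=μ)).const_mul _).add ((integrable_gsq (μ:=μ)).const_mul _)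
    have habs : Integrable (fun x => |(μ.rnDeriv ν x).toReal - 1|) ν :=
      ((integrable_f (μ:=μ)).sub (integrable_const 1)).abs
    have h1 : ∫ x, |(μ.rnDeriv ν x).toReal - 1| ∂ν
        ≤ ∫ x, ((1 / (2 * c)) * (Real.sqrt (μ.rnDeriv ν x).toReal - 1) ^ 2
          + (c / 2) * (Real.sqrt (μ.rnDeriv ν x).toReal + 1) ^ 2) ∂ν :=
      integral_mono habs hint1 hpt
    have h2 : ∫ x, ((1 / (2 * c)) * (Real.sqrt (μ.rnDeriv ν x).toReal - 1) ^ 2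
          + (c / 2) * (Real.sqrt (μ.rnDeriv ν x).toReal + 1) ^ 2) ∂ν
        = (1 / (2 * c)) * ∫ x, (Real.sqrt (μ.rnDeriv ν x).toReal - 1) ^ 2 ∂ν
          + (c / 2) * ∫ x, (Real.sqrt (μ.rnDeriv ν x).toReal + 1) ^ 2 ∂ν := by
      rw [integral_add ((integrable_hell (μ:=μ)).const_mul _)
        ((integrable_gsq (μ:=μ)).const_mul _), integral_const_mul, integral_const_mul]
    have h3 : (1 / (2 * c)) * ∫ x, (Real.sqrt (μ.rnDeriv ν x).toReal - 1) ^ 2 ∂ν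
        ≤ (1 / (2 * c)) * I := by
      have := hell_le_kl hμν hint
      have hc' : 0 ≤ 1 / (2 * c) := by positivity
      exact mul_le_mul_of_nonneg_left this hc'
    have h4 : (c / 2) * ∫ x, (Real.sqrt (μ.rnDeriv ν x).toReal + 1) ^ 2 ∂ν
        ≤ (c / 2) * 4 := mul_le_mul_of_nonneg_left (int_gsq_le hμν) (by positivity)
    calc ∫ x, |(μ.rnDeriv ν x).toReal - 1| ∂ν ≤ _ := h1
      _ = _ := h2
      _ ≤ (1 / (2 * c)) * I + (c / 2) * 4 := add_le_add h3 h4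
      _ = I / (2 * c) + 2 * c := by ring
  rcases eq_or_lt_of_le hI with h0 | hpos
  · have : ∀ ε : ℝ, 0 < ε → ∫ x, |(μ.rnDeriv ν x).toReal - 1| ∂ν ≤ 0 + ε := by
      intro ε hε
      have := key (ε / 2) (by positivity)
      rw [← h0] at this
      calc ∫ x, |(μ.rnDeriv ν x).toReal - 1| ∂ν ≤ 0 / (2 * (ε/2)) + 2 * (ε/2) := this
        _ = 0 + ε := by ring
    have hle := le_of_forall_pos_le_add this
    rw [← h0, Real.sqrt_zero]
    linarith
  · have hs : 0 < Real.sqrt I := Real.sqrt_pos.2 hpos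
    have := key (Real.sqrt I / 2) (by positivity)
    have hss : Real.sqrt I * Real.sqrt I = I := Real.mul_self_sqrt hI
    calc ∫ x, |(μ.rnDeriv ν x).toReal - 1| ∂ν
        ≤ I / (2 * (Real.sqrt I / 2)) + 2 * (Real.sqrt I / 2) := this
      _ = I / Real.sqrt I + Real.sqrt I := by ring_nf
      _ = 2 * Real.sqrt I := by
          field_simp
          linarith [hss]

lemma tvDist_le [IsProbabilityMeasure μ] [IsProbabilityMeasure ν] (hμν : μ ≪ ν)
    (hint : Integrable (fun x => Real.log (μ.rnDeriv ν x).toReal) μ) :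
    tvDist μ ν ≤ 2 * Real.sqrt (∫ x, Real.log (μ.rnDeriv ν x).toReal ∂μ) := by
  have : Nonempty {A : Set α // MeasurableSet A} := ⟨⟨∅, MeasurableSet.empty⟩⟩
  refine ciSup_le fun A => ?_
  have hA : MeasurableSet (A : Set α) := A.2
  have hμA : (μ (A : Set α)).toReal = ∫ x in (A : Set α), (μ.rnDeriv ν x).toReal ∂ν :=
    (Measure.setIntegral_toReal_rnDeriv hμν (A : Set α)).symm
  have hνA : (ν (A : Set α)).toReal = ∫ x in (A : Set α), (1:ℝ) ∂ν := by
    rw [setIntegral_const]; simp; rfl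
  have hdiff : (μ (A : Set α)).toReal - (ν (A : Set α)).toReal
      = ∫ x in (A : Set α), ((μ.rnDeriv ν x).toReal - 1) ∂ν := by
    rw [hμA, hνA, ← integral_sub ((integrable_f (μ:=μ)).restrict) (integrable_const 1).restrict]
  rw [hdiff]
  calc |∫ x in (A : Set α), ((μ.rnDeriv ν x).toReal - 1) ∂ν|
      ≤ ∫ x in (A : Set α), |(μ.rnDeriv ν x).toReal - 1| ∂ν := by
        simpa [Real.norm_eq_abs] using
          norm_integral_le_integral_norm (μ := ν.restrict (A : Set α))
            (fun x => (μ.rnDeriv ν x).toReal - 1)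
    _ ≤ ∫ x, |(μ.rnDeriv ν x).toReal - 1| ∂ν := by
        refine integral_mono_measure Measure.restrict_le_self ?_ ?_
        · exact Filter.Eventually.of_forall fun x => abs_nonneg _
        · exact ((integrable_f (μ:=μ)).sub (integrable_const 1)).abs
    _ ≤ 2 * Real.sqrt (∫ x, Real.log (μ.rnDeriv ν x).toReal ∂μ) :=
        integral_abs_fsub_le hμν hint


lemma isProb_mid (μ ν : Measure α) [IsProbabilityMeasure μ] [IsProbabilityMeasure ν] :
    IsProbabilityMeasure ((2:ℝ≥0∞)⁻¹ • μ + (2:ℝ≥0∞)⁻¹ • ν) := by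
  constructor
  simp [Measure.add_apply, Measure.smul_apply, measure_univ, smul_eq_mul, mul_one,
    ENNReal.inv_two_add_inv_two]

lemma ac_mid (μ ν : Measure α) : μ ≪ ((2:ℝ≥0∞)⁻¹ • μ + (2:ℝ≥0∞)⁻¹ • ν) := by
  intro A hA
  simp only [Measure.add_apply, Measure.smul_apply, smul_eq_mul, add_eq_zero,
    mul_eq_zero] at hA
  rcases hA.1 with h | h
  · simp at h
  · exact h

lemma klDiv_mid_le [IsProbabilityMeasure μ] [IsProbabilityMeasure ν] :
    klDiv μ ((2:ℝ≥0∞)⁻¹ • μ + (2:ℝ≥0∞)⁻¹ • ν) ≤ klDiv μ ν := by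
  by_cases hc : μ ≪ ν ∧ Integrable (fun x => Real.log (μ.rnDeriv ν x).toReal) μ
  swap
  · simp only [klDiv, if_neg hc]; exact le_top
  obtain ⟨hμν, hint⟩ := hc
  set m : Measure α := (2:ℝ≥0∞)⁻¹ • μ + (2:ℝ≥0∞)⁻¹ • ν with hm
  have : IsProbabilityMeasure m := isProb_mid μ ν
  have hμm : μ ≪ m := ac_mid μ ν
  haveI hf1 : IsFiniteMeasure ((2:ℝ≥0∞)⁻¹ • μ) := by
    constructor
    simp [Measure.smul_apply, measure_univ]
  haveI hf2 : IsFiniteMeasure ((2:ℝ≥0∞)⁻¹ • ν) := by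
    constructor
    simp [Measure.smul_apply, measure_univ]
  -- identity for rnDeriv of m
  have hadd : m.rnDeriv ν =ᵐ[ν] fun x => 2⁻¹ * μ.rnDeriv ν x + 2⁻¹ := by
    have h1 : m.rnDeriv ν =ᵐ[ν] ((2:ℝ≥0∞)⁻¹ • μ).rnDeriv ν + ((2:ℝ≥0∞)⁻¹ • ν).rnDeriv ν :=
      Measure.rnDeriv_add _ _ _
    have h2 : ((2:ℝ≥0∞)⁻¹ • μ).rnDeriv ν =ᵐ[ν] (2:ℝ≥0∞)⁻¹ • μ.rnDeriv ν :=
      Measure.rnDeriv_smul_left_of_ne_top μ ν (by simp)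
    have h3 : ((2:ℝ≥0∞)⁻¹ • ν).rnDeriv ν =ᵐ[ν] (2:ℝ≥0∞)⁻¹ • ν.rnDeriv ν :=
      Measure.rnDeriv_smul_left_of_ne_top ν ν (by simp)
    have h4 : ν.rnDeriv ν =ᵐ[ν] fun _ => 1 := Measure.rnDeriv_self ν
    filter_upwards [h1, h2, h3, h4] with x e1 e2 e3 e4
    simp only [Pi.add_apply, Pi.smul_apply, smul_eq_mul] at e1 e2 e3 ⊢
    rw [e1, e2, e3, e4]
    ring
  have hmul : μ.rnDeriv m * m.rnDeriv ν =ᵐ[ν] μ.rnDeriv ν :=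
    Measure.rnDeriv_mul_rnDeriv hμm
  have hpos : ∀ᵐ x ∂μ, 0 < μ.rnDeriv ν x := Measure.rnDeriv_pos hμν
  have hlt : ∀ᵐ x ∂μ, μ.rnDeriv ν x < ∞ := hμν.ae_le (Measure.rnDeriv_lt_top μ ν)
  have hkey : ∀ᵐ x ∂μ, μ.rnDeriv m x * (2⁻¹ * μ.rnDeriv ν x + 2⁻¹) = μ.rnDeriv ν x := by
    filter_upwards [hμν.ae_le hmul, hμν.ae_le hadd] with x e1 e2
    rw [Pi.mul_apply, e2] at e1
    exact e1
  -- real-valued identity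
  have hreal : ∀ᵐ x ∂μ, Real.log (μ.rnDeriv m x).toReal
      = Real.log (μ.rnDeriv ν x).toReal
        - Real.log ((μ.rnDeriv ν x).toReal / 2 + 1 / 2) := by
    filter_upwards [hkey, hpos, hlt] with x e1 e2 e3
    set F := (μ.rnDeriv ν x).toReal with hF
    have hFpos : 0 < F := ENNReal.toReal_pos e2.ne' e3.ne
    have hgne : μ.rnDeriv m x ≠ ∞ := by
      intro htop
      rw [htop] at e1
      rw [ENNReal.top_mul (by simp : (2⁻¹ * μ.rnDeriv ν x + 2⁻¹ : ℝ≥0∞) ≠ 0)] at e1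
      exact e3.ne e1.symm
    have hdne : (2⁻¹ * μ.rnDeriv ν x + 2⁻¹ : ℝ≥0∞) ≠ ∞ := by
      refine ENNReal.add_ne_top.2 ⟨?_, by simp⟩
      exact ENNReal.mul_ne_top (by simp) e3.ne
    have hc2 : ((2:ℝ≥0∞)⁻¹).toReal = 1 / 2 := by simp
    have e1' : (μ.rnDeriv m x).toReal * (F / 2 + 1 / 2) = F := by
      have h9 := congrArg ENNReal.toReal e1
      rw [ENNReal.toReal_mul, ENNReal.toReal_add (ENNReal.mul_ne_top (by simp) e3.ne) (by simp),
        ENNReal.toReal_mul, hc2] at h9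
      rw [← hF] at h9
      linear_combination h9
    have hden : (0:ℝ) < F / 2 + 1 / 2 := by linarith
    have hGpos : 0 < (μ.rnDeriv m x).toReal := by
      nlinarith [ENNReal.toReal_nonneg (a := μ.rnDeriv m x)]
    have : Real.log ((μ.rnDeriv m x).toReal * (F / 2 + 1 / 2))
        = Real.log (μ.rnDeriv m x).toReal + Real.log (F / 2 + 1 / 2) :=
      Real.log_mul hGpos.ne' hden.ne'
    rw [e1'] at this
    linarith
  -- pointwise bounds
  have hb1 : ∀ᵐ x ∂μ, Real.log (μ.rnDeriv m x).toReal
      ≤ (1 / 2) * Real.log (μ.rnDeriv ν x).toReal := by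
    filter_upwards [hreal, hpos, hlt] with x e1 e2 e3
    set F := (μ.rnDeriv ν x).toReal with hF
    have hFpos : 0 < F := ENNReal.toReal_pos e2.ne' e3.ne
    have hsqrt : Real.sqrt F ≤ F / 2 + 1 / 2 := by
      nlinarith [sq_nonneg (Real.sqrt F - 1), Real.sq_sqrt hFpos.le]
    have hlog : Real.log (Real.sqrt F) ≤ Real.log (F / 2 + 1 / 2) :=
      Real.log_le_log (Real.sqrt_pos.2 hFpos) hsqrt
    rw [Real.log_sqrt hFpos.le] at hlog
    rw [e1]
    linarith
  have hb2 : ∀ᵐ x ∂μ, ‖Real.log (μ.rnDeriv m x).toReal‖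
      ≤ 2 * |Real.log (μ.rnDeriv ν x).toReal| + Real.log 2 := by
    filter_upwards [hreal, hpos, hlt] with x e1 e2 e3
    set F := (μ.rnDeriv ν x).toReal with hF
    have hFpos : 0 < F := ENNReal.toReal_pos e2.ne' e3.ne
    have hup : Real.log (F / 2 + 1 / 2) ≤ |Real.log F| := by
      rcases le_total F 1 with h | h
      · have : Real.log (F / 2 + 1 / 2) ≤ Real.log 1 :=
          Real.log_le_log (by linarith) (by linarith)
        rw [Real.log_one] at this
        exact this.trans (abs_nonneg _)
      · have : Real.log (F / 2 + 1 / 2) ≤ Real.log F :=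
          Real.log_le_log (by linarith) (by linarith)
        exact this.trans (le_abs_self _)
    have hlo : -Real.log 2 ≤ Real.log (F / 2 + 1 / 2) := by
      have : Real.log (1 / 2) ≤ Real.log (F / 2 + 1 / 2) :=
        Real.log_le_log (by norm_num) (by linarith)
      rw [one_div, Real.log_inv] at this
      linarith
    have hl2 : (0:ℝ) ≤ Real.log 2 := Real.log_nonneg (by norm_num)
    have h8 := abs_nonneg (Real.log F)
    rw [Real.norm_eq_abs, e1]
    rw [abs_le]
    constructor
    · have := neg_abs_le (Real.log F)
      linarith
    · have := le_abs_self (Real.log F)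
      linarith
  -- integrability of llr μ m
  have hintm : Integrable (fun x => Real.log (μ.rnDeriv m x).toReal) μ := by
    refine Integrable.mono' ((hint.abs.const_mul 2).add (integrable_const (Real.log 2))) ?_ hb2
    exact ((Measure.measurable_rnDeriv μ m).ennreal_toReal.log).aestronglyMeasurable
  -- conclusion
  rw [klDiv, if_pos ⟨hμm, hintm⟩, klDiv, if_pos ⟨hμν, hint⟩]
  rw [EReal.coe_le_coe_iff]
  have h5 : ∫ x, Real.log (μ.rnDeriv m x).toReal ∂μ
      ≤ ∫ x, (1 / 2) * Real.log (μ.rnDeriv ν x).toReal ∂μ :=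
    integral_mono_ae hintm (hint.const_mul _) hb1
  have h6 : ∫ x, (1 / 2) * Real.log (μ.rnDeriv ν x).toReal ∂μ
      = (1 / 2) * ∫ x, Real.log (μ.rnDeriv ν x).toReal ∂μ := integral_const_mul _ _
  have h7 := kl_nonneg hμν hint
  rw [h6] at h5
  linarith


end Aux

section Glue
variable {X : Type*} [MeasurableSpace X]

lemma tvDist_nonneg {μ ν : Measure X} : 0 ≤ tvDist μ ν :=
  Real.iSup_nonneg fun _ => abs_nonneg _

lemma klDiv_nonneg {μ ν : Measure X} [IsProbabilityMeasure μ] [IsProbabilityMeasure ν] :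
    (0 : EReal) ≤ klDiv μ ν := by
  rw [klDiv]
  split_ifs with h
  · exact_mod_cast kl_nonneg h.1 h.2
  · exact le_top

lemma genKL_nonneg {P Q : Set (ProbabilityMeasure X)} (hP : P.Nonempty) :
    (0 : EReal) ≤ genKL P Q := by
  obtain ⟨μ₀, hμ₀⟩ := hP
  refine le_trans ?_ (le_iSup₂_of_le μ₀ hμ₀ le_rfl)
  exact le_iInf₂ fun ν _ => klDiv_nonneg

lemma ereal_half_le {x : EReal} (hx : 0 ≤ x) : ((1/2 : ℝ) : EReal) * x ≤ x := by
  induction x using EReal.rec with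
  | bot => simp at hx
  | coe r =>
    rw [← EReal.coe_mul, EReal.coe_le_coe_iff]
    have : (0:ℝ) ≤ r := EReal.coe_nonneg.1 hx
    linarith
  | top => rw [EReal.mul_top_of_pos (by norm_num)]

lemma ereal_half_nonneg {x : EReal} (hx : 0 ≤ x) : (0:EReal) ≤ ((1/2 : ℝ) : EReal) * x := by
  induction x using EReal.rec with
  | bot => simp at hx
  | coe r =>
    rw [← EReal.coe_mul]
    have : (0:ℝ) ≤ r := EReal.coe_nonneg.1 hx
    exact_mod_cast by linarith
  | top => rw [EReal.mul_top_of_pos (by norm_num)]; exact le_top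

lemma sup_inf_tv_le {Q R : Set (ProbabilityMeasure X)} (hQ : Q.Nonempty) (hR : R.Nonempty)
    {δ : ℝ} (h : genKL Q R < (δ : EReal)) :
    (⨆ μ : Q, ⨅ ν : R, tvDist μ.1.toMeasure ν.1.toMeasure) ≤ 2 * Real.sqrt δ := by
  haveI : Nonempty Q := hQ.to_subtype
  haveI : Nonempty R := hR.to_subtype
  refine ciSup_le fun μ => ?_
  have h1 : (⨅ ν ∈ R, klDiv μ.1.toMeasure ν.toMeasure) < (δ:EReal) :=
    lt_of_le_of_lt (le_iSup₂_of_le μ.1 μ.2 le_rfl) h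
  rw [iInf_subtype'] at h1
  obtain ⟨ν, hνlt⟩ := iInf_lt_iff.1 h1
  have hcond : μ.1.toMeasure ≪ ν.1.toMeasure
      ∧ Integrable (fun x => Real.log (μ.1.toMeasure.rnDeriv ν.1.toMeasure x).toReal)
        μ.1.toMeasure := by
    by_contra hc
    rw [klDiv, if_neg hc] at hνlt
    exact (not_top_lt hνlt).elim
  rw [klDiv, if_pos hcond, EReal.coe_lt_coe_iff] at hνlt
  have hI0 := kl_nonneg hcond.1 hcond.2
  have htv := tvDist_le hcond.1 hcond.2
  have hfin : tvDist μ.1.toMeasure ν.1.toMeasure ≤ 2 * Real.sqrt δ := by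
    refine htv.trans ?_
    have := Real.sqrt_le_sqrt hνlt.le
    linarith
  refine le_trans (ciInf_le ?_ ν) hfin
  exact ⟨0, by rintro x ⟨ν', rfl⟩; exact tvDist_nonneg⟩

lemma tvDist_comm (μ ν : Measure X) : tvDist μ ν = tvDist ν μ := by
  unfold tvDist
  exact iSup_congr fun A => abs_sub_comm _ _

lemma sup_inf_tv_le' {Q R : Set (ProbabilityMeasure X)} (hQ : Q.Nonempty) (hR : R.Nonempty)
    {δ : ℝ} (h : genKL Q R < (δ : EReal)) :
    (⨆ μ : Q, ⨅ ν : R, tvDist ν.1.toMeasure μ.1.toMeasure) ≤ 2 * Real.sqrt δ := by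
  have heq : (⨆ μ : Q, ⨅ ν : R, tvDist ν.1.toMeasure μ.1.toMeasure)
      = (⨆ μ : Q, ⨅ ν : R, tvDist μ.1.toMeasure ν.1.toMeasure) :=
    iSup_congr fun μ => iInf_congr fun ν => tvDist_comm _ _
  rw [heq]
  exact sup_inf_tv_le hQ hR h

end Glue

theorem kl_convergence {X : Type*} [MeasurableSpace X] [TopologicalSpace X]
    [PolishSpace X] [BorelSpace X] (Pn : ℕ → Set (ProbabilityMeasure X)) (P : Set (ProbabilityMeasure X))
    (hne : ∀ n, (Pn n).Nonempty) (hc : ∀ n, IsCompact (Pn n)) (hconv : ∀ n, ConvexPM (Pn n))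
    (hPne : P.Nonempty) (hPc : IsCompact P) (hPconv : ConvexPM P)
    (h : Tendsto (fun n => genKL (Pn n) P + genKL P (Pn n)) atTop (𝓝 (0 : EReal))) :
    Tendsto (fun n => genV (Pn n) P) atTop (𝓝 (0 : ℝ)) ∧
    Tendsto (fun n => genJS (Pn n) P) atTop (𝓝 (0 : EReal)) := by
  haveI : ∀ n, Nonempty (Pn n) := fun n => (hne n).to_subtype
  haveI : Nonempty P := hPne.to_subtype
  have hA : ∀ n, (0:EReal) ≤ genKL (Pn n) P := fun n => genKL_nonneg (hne n)
  have hB : ∀ n, (0:EReal) ≤ genKL P (Pn n) := fun n => genKL_nonneg hPne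
  have ha : Tendsto (fun n => genKL (Pn n) P) atTop (𝓝 (0:EReal)) := by
    refine tendsto_of_tendsto_of_tendsto_of_le_of_le tendsto_const_nhds h hA
      (fun n => le_add_of_nonneg_right (hB n))
  have hb : Tendsto (fun n => genKL P (Pn n)) atTop (𝓝 (0:EReal)) := by
    refine tendsto_of_tendsto_of_tendsto_of_le_of_le tendsto_const_nhds h hB
      (fun n => le_add_of_nonneg_left (hA n))
  constructor
  · -- total variation part
    rw [Metric.tendsto_atTop]
    intro ε hε
    set δ : ℝ := (ε/3)^2 with hδdef
    have hδ : (0:ℝ) < δ := by positivity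
    have hδE : (0:EReal) < (δ : EReal) := by exact_mod_cast hδ
    have e1 := ha.eventually_lt_const hδE
    have e2 := hb.eventually_lt_const hδE
    obtain ⟨N, hN⟩ := Filter.eventually_atTop.1 (e1.and e2)
    refine ⟨N, fun n hn => ?_⟩
    obtain ⟨hn1, hn2⟩ := hN n hn
    have hs1 : (⨆ μ : (Pn n), ⨅ ν : P, tvDist μ.1.toMeasure ν.1.toMeasure)
        ≤ 2 * Real.sqrt δ := sup_inf_tv_le (hne n) hPne hn1
    have hs2 : (⨆ ν : P, ⨅ μ : (Pn n), tvDist μ.1.toMeasure ν.1.toMeasure)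
        ≤ 2 * Real.sqrt δ := sup_inf_tv_le' hPne (hne n) hn2
    have hsqrtδ : Real.sqrt δ = ε/3 := by
      rw [hδdef, Real.sqrt_sq (by positivity)]
    have hVle : genV (Pn n) P ≤ 2 * (ε/3) := by
      rw [genV]
      rw [hsqrtδ] at hs1 hs2
      exact max_le hs1 hs2
    have hV0 : 0 ≤ genV (Pn n) P := by
      refine le_max_of_le_left (Real.iSup_nonneg fun μ => ?_)
      exact le_ciInf fun ν => tvDist_nonneg
    rw [Real.dist_eq, sub_zero, abs_of_nonneg hV0]
    linarith
  · -- JS part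
    have hjs0 : ∀ n, (0:EReal) ≤ genJS (Pn n) P := by
      intro n
      refine add_nonneg (ereal_half_nonneg (genKL_nonneg (hne n)))
        (ereal_half_nonneg (genKL_nonneg hPne))
    have hjsle : ∀ n, genJS (Pn n) P ≤ genKL (Pn n) P + genKL P (Pn n) := by
      intro n
      have hm1 : genKL (Pn n) (midSet (Pn n) P) ≤ genKL (Pn n) P := by
        refine iSup₂_le fun μ hμ => le_iSup₂_of_le μ hμ (le_iInf₂ fun ν hν => ?_)
        refine iInf₂_le_of_le
          ⟨(2:ℝ≥0∞)⁻¹ • μ.toMeasure + (2:ℝ≥0∞)⁻¹ • ν.toMeasure, isProb_mid _ _⟩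
          ⟨μ, hμ, ν, hν, rfl⟩ ?_
        exact klDiv_mid_le
      have hm2 : genKL P (midSet (Pn n) P) ≤ genKL P (Pn n) := by
        refine iSup₂_le fun ν hν => le_iSup₂_of_le ν hν (le_iInf₂ fun μ hμ => ?_)
        refine iInf₂_le_of_le
          ⟨(2:ℝ≥0∞)⁻¹ • μ.toMeasure + (2:ℝ≥0∞)⁻¹ • ν.toMeasure, isProb_mid _ _⟩
          ⟨μ, hμ, ν, hν, rfl⟩ ?_
        show klDiv ν.toMeasure ((2:ℝ≥0∞)⁻¹ • μ.toMeasure + (2:ℝ≥0∞)⁻¹ • ν.toMeasure)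
          ≤ klDiv ν.toMeasure μ.toMeasure
        rw [add_comm]
        exact klDiv_mid_le
      calc genJS (Pn n) P
          = ((1/2 : ℝ) : EReal) * genKL (Pn n) (midSet (Pn n) P)
            + ((1/2 : ℝ) : EReal) * genKL P (midSet (Pn n) P) := rfl
        _ ≤ genKL (Pn n) (midSet (Pn n) P) + genKL P (midSet (Pn n) P) :=
            add_le_add (ereal_half_le (genKL_nonneg (hne n)))
              (ereal_half_le (genKL_nonneg hPne))
        _ ≤ genKL (Pn n) P + genKL P (Pn n) := add_le_add hm1 hm2
    exact tendsto_of_tendsto_of_tendsto_of_le_of_le tendsto_const_nhds h hjs0 hjsle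
end

section
/- Duality formula for the generalized total variation metric: for weakly compact convex sets P, Q of probability measures on a Polish space, V(P,Q) = (1/2)·sup over bounded continuous φ with ‖φ‖_∞ ≤ 1 of |sup_{μ∈P} E_μ[φ] − sup_{ν∈Q} E_ν[φ]|. -/
open MeasureTheory Real ENNReal Filter Topology
open scoped Classical

namespace GenVAux

open BoundedContinuousFunction

lemma bddAbove_range_of_le {ι : Sort*} {f : ι → ℝ} {c : ℝ} (h : ∀ i, f i ≤ c) :
    BddAbove (Set.range f) := ⟨c, by rintro _ ⟨i, rfl⟩; exact h i⟩

lemma bddBelow_range_of_le {ι : Sort*} {f : ι → ℝ} {c : ℝ} (h : ∀ i, c ≤ f i) :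
    BddBelow (Set.range f) := ⟨c, by rintro _ ⟨i, rfl⟩; exact h i⟩

variable {X : Type*} [MeasurableSpace X]

lemma toReal_le_one (μ : Measure X) [IsProbabilityMeasure μ] (A : Set X) :
    (μ A).toReal ≤ 1 := by
  have h := prob_le_one (μ := μ) (s := A)
  simpa using ENNReal.toReal_mono one_ne_top h

lemma tv_term_le_one (μ ν : Measure X) [IsProbabilityMeasure μ] [IsProbabilityMeasure ν]
    (A : Set X) : |(μ A).toReal - (ν A).toReal| ≤ 1 := by
  rw [abs_sub_le_iff]
  constructor <;>
    [(have h1 := toReal_le_one μ A); (have h1 := toReal_le_one ν A)] <;>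
    [(have h2 := ENNReal.toReal_nonneg (a := ν A)); (have h2 := ENNReal.toReal_nonneg (a := μ A))] <;>
    linarith

lemma tv_bdd (μ ν : Measure X) [IsProbabilityMeasure μ] [IsProbabilityMeasure ν] :
    BddAbove (Set.range fun A : {A : Set X // MeasurableSet A} =>
      |(μ A.1).toReal - (ν A.1).toReal|) :=
  bddAbove_range_of_le fun A => tv_term_le_one μ ν A.1

lemma le_tv (μ ν : Measure X) [IsProbabilityMeasure μ] [IsProbabilityMeasure ν]
    {A : Set X} (hA : MeasurableSet A) :
    |(μ A).toReal - (ν A).toReal| ≤ tvDist μ ν :=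
  le_ciSup (tv_bdd μ ν) ⟨A, hA⟩

lemma tv_nonneg (μ ν : Measure X) [IsProbabilityMeasure μ] [IsProbabilityMeasure ν] :
    0 ≤ tvDist μ ν :=
  le_trans (abs_nonneg _) (le_tv μ ν MeasurableSet.empty)

lemma tv_le_one (μ ν : Measure X) [IsProbabilityMeasure μ] [IsProbabilityMeasure ν] :
    tvDist μ ν ≤ 1 :=
  ciSup_le fun A => tv_term_le_one μ ν A.1

lemma tv_comm (μ ν : Measure X) : tvDist μ ν = tvDist ν μ := by
  unfold tvDist
  congr 1
  funext A
  rw [abs_sub_comm]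

variable [TopologicalSpace X]

lemma abs_integral_le_one [OpensMeasurableSpace X] (μ : Measure X) [IsProbabilityMeasure μ]
    {φ : X →ᵇ ℝ} (hφ : ‖φ‖ ≤ 1) : |∫ x, φ x ∂μ| ≤ 1 := by
  have h := norm_integral_le_of_norm_le_const (μ := μ) (f := fun x => φ x) (C := 1)
    (Filter.Eventually.of_forall fun x => (φ.norm_coe_le_norm x).trans hφ)
  simpa [measure_univ] using h

/-- Easy direction of pointwise duality. -/
lemma integral_sub_le_two_tv [OpensMeasurableSpace X] (μ ν : Measure X)
    [IsProbabilityMeasure μ] [IsProbabilityMeasure ν] {φ : X →ᵇ ℝ} (hφ : ‖φ‖ ≤ 1) :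
    ∫ x, φ x ∂μ - ∫ x, φ x ∂ν ≤ 2 * tvDist μ ν := by
  set ρ : Measure X := μ + ν with hρ
  have hμρ : μ ≪ ρ := Measure.absolutelyContinuous_of_le (Measure.le_add_right le_rfl)
  have hνρ : ν ≪ ρ := Measure.absolutelyContinuous_of_le (Measure.le_add_left le_rfl)
  set F := fun x => (μ.rnDeriv ρ x).toReal with hF
  set G := fun x => (ν.rnDeriv ρ x).toReal with hG
  have hFmeas : Measurable F := (Measure.measurable_rnDeriv μ ρ).ennreal_toReal
  have hGmeas : Measurable G := (Measure.measurable_rnDeriv ν ρ).ennreal_toReal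
  have hFi : Integrable F ρ := Measure.integrable_toReal_rnDeriv
  have hGi : Integrable G ρ := Measure.integrable_toReal_rnDeriv
  have hμint : ∫ x, φ x ∂μ = ∫ x, F x • φ x ∂ρ := (integral_rnDeriv_smul hμρ).symm
  have hνint : ∫ x, φ x ∂ν = ∫ x, G x • φ x ∂ρ := (integral_rnDeriv_smul hνρ).symm
  have hFφ : Integrable (fun x => F x • φ x) ρ :=
    (integrable_rnDeriv_smul_iff hμρ).mpr (φ.integrable μ)
  have hGφ : Integrable (fun x => G x • φ x) ρ :=
    (integrable_rnDeriv_smul_iff hνρ).mpr (φ.integrable ν)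
  set A := {x | G x ≤ F x} with hAdef
  have hA : MeasurableSet A := measurableSet_le hGmeas hFmeas
  have key : ∫ x, F x • φ x ∂ρ - ∫ x, G x • φ x ∂ρ ≤ ∫ x, |F x - G x| ∂ρ := by
    rw [← integral_sub hFφ hGφ]
    apply integral_mono (hFφ.sub hGφ) (hFi.sub hGi).abs
    intro x
    have hφx : |φ x| ≤ 1 := by
      have := (φ.norm_coe_le_norm x).trans hφ
      simpa [Real.norm_eq_abs] using this
    have h1 : F x • φ x - G x • φ x = (F x - G x) * φ x := by
      simp [smul_eq_mul]; ring
    calc F x • φ x - G x • φ x = (F x - G x) * φ x := h1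
      _ ≤ |(F x - G x) * φ x| := le_abs_self _
      _ = |F x - G x| * |φ x| := abs_mul _ _
      _ ≤ |F x - G x| * 1 := by
          exact mul_le_mul_of_nonneg_left hφx (abs_nonneg _)
      _ = |F x - G x| := mul_one _
  have split : ∫ x, |F x - G x| ∂ρ
      = (∫ x in A, (F x - G x) ∂ρ) + ∫ x in Aᶜ, (G x - F x) ∂ρ := by
    have habs : Integrable (fun x => |F x - G x|) ρ := (hFi.sub hGi).abs
    rw [← integral_add_compl hA habs]
    congr 1
    · apply setIntegral_congr_fun hA
      intro x hx
      exact abs_of_nonneg (sub_nonneg.mpr hx)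
    · apply setIntegral_congr_fun hA.compl
      intro x hx
      have hx' : F x < G x := by
        simpa [hAdef] using hx
      show |F x - G x| = G x - F x
      rw [abs_of_neg (by linarith : F x - G x < 0)]
      ring
  have hset : ∀ (m : Measure X) (hm : m ≪ ρ) [SigmaFinite m] {B : Set X}
      (hB : MeasurableSet B), ∫ x in B, (m.rnDeriv ρ x).toReal ∂ρ = (m B).toReal := by
    intro m hm _ B hB
    have h := setIntegral_rnDeriv_smul hm hB (f := fun _ => (1 : ℝ))
    simpa [setIntegral_const, measureReal_def] using h
  have e1 : ∫ x in A, (F x - G x) ∂ρ = (μ A).toReal - (ν A).toReal := by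
    rw [integral_sub hFi.integrableOn hGi.integrableOn, hset μ hμρ hA, hset ν hνρ hA]
  have e2 : ∫ x in Aᶜ, (G x - F x) ∂ρ = (ν Aᶜ).toReal - (μ Aᶜ).toReal := by
    rw [integral_sub hGi.integrableOn hFi.integrableOn, hset ν hνρ hA.compl, hset μ hμρ hA.compl]
  have b1 : (μ A).toReal - (ν A).toReal ≤ tvDist μ ν :=
    (le_abs_self _).trans (le_tv μ ν hA)
  have b2 : (ν Aᶜ).toReal - (μ Aᶜ).toReal ≤ tvDist μ ν := by
    have := (neg_abs_le ((μ Aᶜ).toReal - (ν Aᶜ).toReal))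
    have h := le_tv μ ν hA.compl
    linarith [abs_sub_comm ((μ Aᶜ).toReal) ((ν Aᶜ).toReal) ▸ le_tv μ ν hA.compl,
      le_abs_self ((ν Aᶜ).toReal - (μ Aᶜ).toReal), (abs_sub_comm ((ν Aᶜ).toReal) ((μ Aᶜ).toReal))]
  calc ∫ x, φ x ∂μ - ∫ x, φ x ∂ν = ∫ x, F x • φ x ∂ρ - ∫ x, G x • φ x ∂ρ := by
        rw [hμint, hνint]
    _ ≤ ∫ x, |F x - G x| ∂ρ := key
    _ = ((μ A).toReal - (ν A).toReal) + ((ν Aᶜ).toReal - (μ Aᶜ).toReal) := by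
        rw [split, e1, e2]
    _ ≤ tvDist μ ν + tvDist μ ν := add_le_add b1 b2
    _ = 2 * tvDist μ ν := by ring

end GenVAux

namespace GenVAux

open BoundedContinuousFunction

variable {X : Type*} [MeasurableSpace X] [TopologicalSpace X] [PolishSpace X] [BorelSpace X]

/-- Hard direction pointwise: approximating `2*(μ A - ν A)` by a bounded continuous function. -/
lemma exists_bcf (μ ν : Measure X) [IsProbabilityMeasure μ] [IsProbabilityMeasure ν]
    {A : Set X} (hA : MeasurableSet A) {ε : ℝ} (hε : 0 < ε) :
    ∃ φ : X →ᵇ ℝ, ‖φ‖ ≤ 1 ∧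
      2 * ((μ A).toReal - (ν A).toReal) - ε ≤ ∫ x, φ x ∂μ - ∫ x, φ x ∂ν := by
  have hNorm : NormalSpace X := by letI := TopologicalSpace.upgradeIsCompletelyMetrizable X; infer_instance
  have hε4 : (0:ℝ) < ε / 4 := by linarith
  have hε4' : (ENNReal.ofReal (ε/4)) ≠ 0 := by
    simp [ENNReal.ofReal_eq_zero]; linarith
  obtain ⟨C, hCA, hCclosed, hμC⟩ :=
    hA.exists_isClosed_lt_add (μ := μ) (measure_ne_top μ A) hε4'
  obtain ⟨U, hAU, hUopen, hνU⟩ :=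
    A.exists_isOpen_lt_add (μ := ν) (measure_ne_top ν A) hε4'
  have hdis : Disjoint Uᶜ C :=
    disjoint_compl_left.mono_right (hCA.trans hAU)
  obtain ⟨g, hg0, hg1, hg01⟩ :=
    exists_continuous_zero_one_of_isClosed (isClosed_compl_iff.mpr hUopen) hCclosed hdis
  set φf : X → ℝ := fun x => 2 * g x - 1 with hφf
  have hcont : Continuous φf := by fun_prop
  have hb : ∀ x, ‖φf x‖ ≤ 1 := by
    intro x
    have h := hg01 x
    rw [Real.norm_eq_abs, abs_le]
    constructor <;> simp [hφf] <;> linarith [h.1, h.2]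
  refine ⟨ofNormedAddCommGroup φf hcont 1 hb,
    norm_ofNormedAddCommGroup_le hcont zero_le_one hb, ?_⟩
  have hφint : ∀ (m : Measure X) [IsProbabilityMeasure m], Integrable φf m := by
    intro m _
    exact (ofNormedAddCommGroup φf hcont 1 hb).integrable m
  -- lower bound for ∫ φf dμ
  have hCind : Integrable (fun x => 2 * C.indicator (fun _ => (1:ℝ)) x - 1) μ :=
    (((integrable_const 1).indicator hCclosed.measurableSet).const_mul 2).sub (integrable_const 1)
  have hlow : 2 * (μ C).toReal - 1 ≤ ∫ x, φf x ∂μ := by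
    have hmono : ∀ x, 2 * C.indicator (fun _ => (1:ℝ)) x - 1 ≤ φf x := by
      intro x
      by_cases hx : x ∈ C
      · simp [Set.indicator_of_mem hx, hφf, hg1 hx]
      · simp only [Set.indicator_of_notMem hx, hφf]
        have := (hg01 x).1
        linarith
    have := integral_mono hCind (hφint μ) hmono
    calc 2 * (μ C).toReal - 1
        = ∫ x, (2 * C.indicator (fun _ => (1:ℝ)) x - 1) ∂μ := by
          rw [integral_sub (((integrable_const 1).indicator hCclosed.measurableSet).const_mul 2)
            (integrable_const 1), integral_const_mul, integral_indicator_const _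
            hCclosed.measurableSet]
          simp [measure_univ, measureReal_def]
      _ ≤ ∫ x, φf x ∂μ := this
  -- upper bound for ∫ φf dν
  have hUind : Integrable (fun x => 2 * U.indicator (fun _ => (1:ℝ)) x - 1) ν :=
    (((integrable_const 1).indicator hUopen.measurableSet).const_mul 2).sub (integrable_const 1)
  have hhigh : ∫ x, φf x ∂ν ≤ 2 * (ν U).toReal - 1 := by
    have hmono : ∀ x, φf x ≤ 2 * U.indicator (fun _ => (1:ℝ)) x - 1 := by
      intro x
      by_cases hx : x ∈ U
      · simp only [Set.indicator_of_mem hx, hφf]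
        have := (hg01 x).2
        linarith
      · have hx' : x ∈ Uᶜ := hx
        simp [Set.indicator_of_notMem hx, hφf, hg0 hx']
    have := integral_mono (hφint ν) hUind hmono
    calc ∫ x, φf x ∂ν ≤ ∫ x, (2 * U.indicator (fun _ => (1:ℝ)) x - 1) ∂ν := this
      _ = 2 * (ν U).toReal - 1 := by
          rw [integral_sub (((integrable_const 1).indicator hUopen.measurableSet).const_mul 2)
            (integrable_const 1), integral_const_mul, integral_indicator_const _
            hUopen.measurableSet]
          simp [measure_univ, measureReal_def]
  -- numeric estimates
  have hμ' : (μ A).toReal ≤ (μ C).toReal + ε/4 := by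
    have h1 : μ A ≤ μ C + ENNReal.ofReal (ε/4) := hμC.le
    have h2 := ENNReal.toReal_mono (by finiteness) h1
    rwa [ENNReal.toReal_add (measure_ne_top μ C) ofReal_ne_top,
      ENNReal.toReal_ofReal hε4.le] at h2
  have hν' : (ν U).toReal ≤ (ν A).toReal + ε/4 := by
    have h1 : ν U ≤ ν A + ENNReal.ofReal (ε/4) := hνU.le
    have h2 := ENNReal.toReal_mono (by finiteness) h1
    rwa [ENNReal.toReal_add (measure_ne_top ν A) ofReal_ne_top,
      ENNReal.toReal_ofReal hε4.le] at h2
  have hcoe : ∀ (m : Measure X), ∫ x, (ofNormedAddCommGroup φf hcont 1 hb) x ∂m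
      = ∫ x, φf x ∂m := by intro m; rfl
  rw [hcoe, hcoe]
  linarith

end GenVAux

namespace GenVAux

open BoundedContinuousFunction

variable {X : Type*} [MeasurableSpace X] [TopologicalSpace X]

instance ballNonempty : Nonempty {φ : BoundedContinuousFunction X ℝ // ‖φ‖ ≤ 1} :=
  ⟨⟨0, by simp⟩⟩

noncomputable def Dfun (μ ν : Measure X) : ℝ :=
  ⨆ φ : {φ : BoundedContinuousFunction X ℝ // ‖φ‖ ≤ 1}, (∫ x, φ.1 x ∂μ - ∫ x, φ.1 x ∂ν)

variable [OpensMeasurableSpace X]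

lemma Dfun_term_le_two (μ ν : Measure X) [IsProbabilityMeasure μ] [IsProbabilityMeasure ν]
    (φ : {φ : BoundedContinuousFunction X ℝ // ‖φ‖ ≤ 1}) :
    ∫ x, φ.1 x ∂μ - ∫ x, φ.1 x ∂ν ≤ 2 := by
  have h1 := abs_le.mp (abs_integral_le_one μ φ.2)
  have h2 := abs_le.mp (abs_integral_le_one ν φ.2)
  linarith [h1.2, h2.1]

lemma Dfun_bdd (μ ν : Measure X) [IsProbabilityMeasure μ] [IsProbabilityMeasure ν] :
    BddAbove (Set.range fun φ : {φ : BoundedContinuousFunction X ℝ // ‖φ‖ ≤ 1} =>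
      ∫ x, φ.1 x ∂μ - ∫ x, φ.1 x ∂ν) :=
  bddAbove_range_of_le (Dfun_term_le_two μ ν)

lemma le_Dfun (μ ν : Measure X) [IsProbabilityMeasure μ] [IsProbabilityMeasure ν]
    (φ : {φ : BoundedContinuousFunction X ℝ // ‖φ‖ ≤ 1}) :
    ∫ x, φ.1 x ∂μ - ∫ x, φ.1 x ∂ν ≤ Dfun μ ν :=
  le_ciSup (Dfun_bdd μ ν) φ

lemma Dfun_nonneg (μ ν : Measure X) [IsProbabilityMeasure μ] [IsProbabilityMeasure ν] :
    0 ≤ Dfun μ ν := by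
  have h := le_Dfun μ ν ⟨0, by simp⟩
  simpa using h

variable [PolishSpace X] [BorelSpace X]

lemma Dfun_eq (μ ν : Measure X) [IsProbabilityMeasure μ] [IsProbabilityMeasure ν] :
    Dfun μ ν = 2 * tvDist μ ν := by
  apply le_antisymm
  · exact ciSup_le fun φ => integral_sub_le_two_tv μ ν φ.2
  · have key : ∀ {B : Set X}, MeasurableSet B →
        2 * ((μ B).toReal - (ν B).toReal) ≤ Dfun μ ν := by
      intro B hB
      apply _root_.le_of_forall_pos_le_add
      intro ε hε
      obtain ⟨φ, hφ1, hφ2⟩ := exists_bcf μ ν hB hε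
      have := le_Dfun μ ν ⟨φ, hφ1⟩
      simp only at this
      linarith
    have hcompl : ∀ {B : Set X}, MeasurableSet B →
        (ν B).toReal - (μ B).toReal = (μ Bᶜ).toReal - (ν Bᶜ).toReal := by
      intro B hB
      have h1 : (μ Bᶜ).toReal = 1 - (μ B).toReal := by
        rw [measure_compl hB (measure_ne_top μ B), measure_univ,
          ENNReal.toReal_sub_of_le prob_le_one one_ne_top]
        simp
      have h2 : (ν Bᶜ).toReal = 1 - (ν B).toReal := by
        rw [measure_compl hB (measure_ne_top ν B), measure_univ,
          ENNReal.toReal_sub_of_le prob_le_one one_ne_top]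
        simp
      rw [h1, h2]; ring
    have h2 : tvDist μ ν ≤ Dfun μ ν / 2 := by
      apply ciSup_le
      rintro ⟨A, hA⟩
      rcases abs_cases ((μ A).toReal - (ν A).toReal) with ⟨heq, _⟩ | ⟨heq, _⟩
      · rw [heq]
        linarith [key hA]
      · rw [heq]
        have h3 := key hA.compl
        rw [← hcompl hA] at h3
        linarith
    linarith

end GenVAux

namespace GenVAux

open BoundedContinuousFunction MeasureTheory

variable {X : Type*} [MeasurableSpace X] [TopologicalSpace X] [PolishSpace X] [BorelSpace X]

lemma minimax (μ₀ : ProbabilityMeasure X) (Q : Set (ProbabilityMeasure X))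
    (hQne : Q.Nonempty) (hQc : IsCompact Q) (hQconv : ConvexPM Q) :
    (⨅ ν : Q, Dfun μ₀.toMeasure ν.1.toMeasure) ≤
      ⨆ φ : {φ : BoundedContinuousFunction X ℝ // ‖φ‖ ≤ 1},
        (∫ x, φ.1 x ∂μ₀.toMeasure - ⨆ ν : Q, ∫ x, φ.1 x ∂ν.1.toMeasure) := by
  haveI : Nonempty ↥Q := hQne.to_subtype
  have hJbdd : ∀ φ : {φ : BoundedContinuousFunction X ℝ // ‖φ‖ ≤ 1},
      BddAbove (Set.range fun ν : Q => ∫ x, φ.1 x ∂ν.1.toMeasure) :=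
    fun φ => bddAbove_range_of_le fun ν => (abs_le.mp (abs_integral_le_one _ φ.2)).2
  by_contra hcon
  push_neg at hcon
  set c := ⨆ φ : {φ : BoundedContinuousFunction X ℝ // ‖φ‖ ≤ 1},
    (∫ x, φ.1 x ∂μ₀.toMeasure - ⨆ ν : Q, ∫ x, φ.1 x ∂ν.1.toMeasure) with hcdef
  set t := ⨅ ν : Q, Dfun μ₀.toMeasure ν.1.toMeasure with htdef
  set c' := (c + t) / 2 with hc'def
  have hcc' : c < c' := by
    simp only [hc'def]; linarith
  have hc't : c' < t := by
    simp only [hc'def]; linarith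
  have hDbddbelow : BddBelow (Set.range fun ν : Q => Dfun μ₀.toMeasure ν.1.toMeasure) :=
    bddBelow_range_of_le fun ν => Dfun_nonneg _ _
  -- the open cover of Q
  set O : {φ : BoundedContinuousFunction X ℝ // ‖φ‖ ≤ 1} → Set (ProbabilityMeasure X) :=
    fun φ => {ν | c' < ∫ x, φ.1 x ∂μ₀.toMeasure - ∫ x, φ.1 x ∂ν.toMeasure} with hOdef
  have hOopen : ∀ φ, IsOpen (O φ) := by
    intro φ
    have hcont : Continuous fun ν : ProbabilityMeasure X => ∫ x, φ.1 x ∂(ν : Measure X) :=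
      ProbabilityMeasure.continuous_integral_boundedContinuousFunction φ.1
    have heq : O φ = (fun ν : ProbabilityMeasure X => ∫ x, φ.1 x ∂(ν : Measure X)) ⁻¹'
        (Set.Iio (∫ x, φ.1 x ∂μ₀.toMeasure - c')) := by
      ext ν
      simp only [hOdef, Set.mem_setOf_eq, Set.mem_preimage, Set.mem_Iio]
      constructor <;> intro h <;> [skip; skip] <;> linarith
    rw [heq]
    exact isOpen_Iio.preimage hcont
  have hcover : Q ⊆ ⋃ φ, O φ := by
    intro ν hν
    have h1 : c' < Dfun μ₀.toMeasure (ν : ProbabilityMeasure X).toMeasure :=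
      lt_of_lt_of_le hc't (ciInf_le hDbddbelow (⟨ν, hν⟩ : Q))
    unfold Dfun at h1
    obtain ⟨φ, hφ⟩ := exists_lt_of_lt_ciSup h1
    exact Set.mem_iUnion.mpr ⟨φ, hφ⟩
  obtain ⟨s, hs⟩ := hQc.elim_finite_subcover O hOopen hcover
  obtain ⟨ν₀, hν₀Q⟩ := hQne
  set e : {i // i ∈ s} → ({i // i ∈ s} → ℝ) := fun i => Pi.single i 1 with hedef
  -- the map into the finite-dimensional space
  set T : ProbabilityMeasure X → ({i // i ∈ s} → ℝ) := fun ν i =>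
    ∫ x, i.1.1 x ∂μ₀.toMeasure - ∫ x, i.1.1 x ∂ν.toMeasure with hTdef
  have hTcont : Continuous T := continuous_pi fun i =>
    continuous_const.sub (ProbabilityMeasure.continuous_integral_boundedContinuousFunction i.1.1)
  set S := T '' Q with hSdef
  have hScomp : IsCompact S := hQc.image hTcont
  have hSconv : Convex ℝ S := by
    rintro x ⟨ν₁, hν₁, rfl⟩ y ⟨ν₂, hν₂, rfl⟩ a b ha hb hab
    obtain ⟨κ, hκQ, hκ⟩ := hQconv ν₁ hν₁ ν₂ hν₂ (ENNReal.ofReal a) (ENNReal.ofReal b)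
      (by rw [← ENNReal.ofReal_add ha hb, hab, ENNReal.ofReal_one])
    refine ⟨κ, hκQ, ?_⟩
    funext i
    have hint : ∫ x, i.1.1 x ∂κ.toMeasure
        = a * ∫ x, i.1.1 x ∂ν₁.toMeasure + b * ∫ x, i.1.1 x ∂ν₂.toMeasure := by
      rw [hκ, integral_add_measure ((i.1.1.integrable _).smul_measure ENNReal.ofReal_ne_top)
          ((i.1.1.integrable _).smul_measure ENNReal.ofReal_ne_top),
        integral_smul_measure, integral_smul_measure,
        ENNReal.toReal_ofReal ha, ENNReal.toReal_ofReal hb, smul_eq_mul, smul_eq_mul]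
    have hab' : a * (∫ x, i.1.1 x ∂μ₀.toMeasure) + b * (∫ x, i.1.1 x ∂μ₀.toMeasure)
        = ∫ x, i.1.1 x ∂μ₀.toMeasure := by rw [← add_mul, hab, one_mul]
    simp only [Pi.add_apply, Pi.smul_apply, smul_eq_mul, hTdef]
    rw [hint]
    linarith
  set Cs : Set ({i // i ∈ s} → ℝ) := {x | ∀ i, x i ≤ c'} with hCsdef
  have hCconv : Convex ℝ Cs := by
    intro x hx y hy a b ha hb hab
    intro i
    show a * x i + b * y i ≤ c'
    have hsum : a * c' + b * c' = c' := by rw [← add_mul, hab, one_mul]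
    have h1 := mul_le_mul_of_nonneg_left (hx i) ha
    have h2 := mul_le_mul_of_nonneg_left (hy i) hb
    linarith
  have hCclosed : IsClosed Cs := by
    have heq : Cs = ⋂ i, {x : {i // i ∈ s} → ℝ | x i ≤ c'} := by
      ext x; simp [hCsdef]
    rw [heq]
    exact isClosed_iInter fun i => isClosed_le (continuous_apply i) continuous_const
  have hdisj : Disjoint S Cs := by
    rw [Set.disjoint_left]
    rintro x ⟨ν, hν, rfl⟩ hxC
    obtain ⟨i, his, hmem⟩ := Set.mem_iUnion₂.mp (hs hν)
    exact absurd (hxC ⟨i, his⟩) (not_le.mpr hmem)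
  obtain ⟨f, u, v, hfS, huv, hfC⟩ :=
    geometric_hahn_banach_compact_closed hSconv hScomp hCconv hCclosed hdisj
  set w : {i // i ∈ s} → ℝ := fun i => -(f (e i)) with hwdef
  have hfdecomp : ∀ x : {i // i ∈ s} → ℝ, f x = ∑ i, x i * f (e i) := by
    intro x
    have hx : x = ∑ i : {i // i ∈ s}, x i • e i := by
      funext j
      rw [Finset.sum_apply]
      simp [hedef, Pi.single_apply]
    conv_lhs => rw [hx]
    rw [map_sum]
    apply Finset.sum_congr rfl
    intro i _
    rw [f.map_smul, smul_eq_mul]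
  have hwnonneg : ∀ i, 0 ≤ w i := by
    intro i
    by_contra hneg
    push_neg at hneg
    have hfi : 0 < f (e i) := by
      have : w i < 0 := hneg
      simp only [hwdef] at this
      linarith
    set fi := f (e i) with hfidef
    set fc := f (fun _ => c') with hfcdef
    set tt := min 0 ((v - fc)/fi - 1) with httdef
    have htt0 : tt ≤ 0 := min_le_left _ _
    have htlt : fc + tt * fi < v := by
      have h1 : tt ≤ (v - fc)/fi - 1 := min_le_right _ _
      have h2 : tt * fi ≤ ((v - fc)/fi - 1) * fi := mul_le_mul_of_nonneg_right h1 hfi.le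
      have h3 : ((v - fc)/fi) * fi = v - fc := div_mul_cancel₀ _ hfi.ne'
      nlinarith
    have hmemC : ((fun _ => c') + tt • e i) ∈ Cs := by
      intro j
      simp only [Pi.add_apply, Pi.smul_apply, smul_eq_mul]
      by_cases hji : j = i
      · subst hji
        simp only [hedef, Pi.single_eq_same, mul_one]
        linarith
      · simp [hedef, Pi.single_apply, hji]
    have hcontr := hfC _ hmemC
    rw [f.map_add, f.map_smul, smul_eq_mul] at hcontr
    rw [← hfcdef, ← hfidef] at hcontr
    linarith
  have hconstC : (fun _ => c') ∈ Cs := fun i => le_rfl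
  have hvfc : v < f (fun _ => c') := hfC _ hconstC
  have hfcval : f (fun _ => c') = -(c' * ∑ i, w i) := by
    rw [hfdecomp]
    rw [Finset.mul_sum, ← Finset.sum_neg_distrib]
    apply Finset.sum_congr rfl
    intro i _
    simp only [hwdef]
    ring
  have hfTval : ∀ ν : ProbabilityMeasure X, f (T ν) = -(∑ i, w i * T ν i) := by
    intro ν
    rw [hfdecomp, ← Finset.sum_neg_distrib]
    apply Finset.sum_congr rfl
    intro i _
    simp only [hwdef]
    ring
  have hkey : ∀ ν ∈ Q, c' * (∑ i, w i) < ∑ i, w i * T ν i := by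
    intro ν hν
    have h1 : f (T ν) < u := hfS _ ⟨ν, hν, rfl⟩
    rw [hfTval] at h1
    rw [hfcval] at hvfc
    linarith
  have hsum_nonneg : 0 ≤ ∑ i, w i := Finset.sum_nonneg fun i _ => hwnonneg i
  have hsum_pos : 0 < ∑ i, w i := by
    rcases eq_or_lt_of_le hsum_nonneg with hzero | hpos
    · exfalso
      have hall : ∀ i ∈ Finset.univ, w i = 0 :=
        (Finset.sum_eq_zero_iff_of_nonneg (fun i _ => hwnonneg i)).mp hzero.symm
      have hS0 : ∑ i, w i * T ν₀ i = 0 :=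
        Finset.sum_eq_zero fun i hi => by rw [hall i hi, zero_mul]
      have := hkey ν₀ hν₀Q
      rw [← hzero, hS0] at this
      simp at this
    · exact hpos
  set p : {i // i ∈ s} → ℝ := fun i => w i / (∑ j, w j) with hpdef
  have hpnn : ∀ i, 0 ≤ p i := fun i => div_nonneg (hwnonneg i) hsum_pos.le
  have hpsum : ∑ i, p i = 1 := by
    rw [hpdef, ← Finset.sum_div, div_self hsum_pos.ne']
  set φstar : BoundedContinuousFunction X ℝ := ∑ i, p i • i.1.1 with hφstardef
  have hφstarapp : ∀ x, φstar x = ∑ i, p i * i.1.1 x := by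
    intro x
    rw [hφstardef]
    simp [Finset.sum_apply]
  have hφstarnorm : ‖φstar‖ ≤ 1 := by
    calc ‖φstar‖ ≤ ∑ i, ‖p i • i.1.1‖ := norm_sum_le _ _
      _ ≤ ∑ i, p i * ‖i.1.1‖ := by
          apply Finset.sum_le_sum
          intro i _
          have h := norm_smul_le (p i) (i.1.1 : BoundedContinuousFunction X ℝ)
          rw [Real.norm_eq_abs, abs_of_nonneg (hpnn i)] at h
          exact h
      _ ≤ ∑ i, p i * 1 :=
          Finset.sum_le_sum fun i _ => mul_le_mul_of_nonneg_left i.1.2 (hpnn i)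
      _ = 1 := by simp only [mul_one]; exact hpsum
  have hφstarint : ∀ (m : ProbabilityMeasure X),
      ∫ x, φstar x ∂m.toMeasure = ∑ i, p i * ∫ x, i.1.1 x ∂m.toMeasure := by
    intro m
    have : (fun x => φstar x) = fun x => ∑ i, p i * i.1.1 x := funext hφstarapp
    rw [this, integral_finset_sum _ (fun i _ => ((i.1.1.integrable _)).const_mul _)]
    simp_rw [integral_const_mul]
  have hfinal : ∀ ν : Q, ∫ x, φstar x ∂ν.1.toMeasure < ∫ x, φstar x ∂μ₀.toMeasure - c' := by
    intro ν
    have h := hkey ν.1 ν.2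
    have h2 : c' < ∑ i, p i * T ν.1 i := by
      have heq : ∑ i, p i * T ν.1 i = (∑ i, w i * T ν.1 i) / (∑ j, w j) := by
        rw [Finset.sum_div]
        apply Finset.sum_congr rfl
        intro i _
        rw [hpdef]
        ring
      rw [heq, lt_div_iff₀ hsum_pos]
      linarith
    have h3 : ∑ i, p i * T ν.1 i
        = ∫ x, φstar x ∂μ₀.toMeasure - ∫ x, φstar x ∂ν.1.toMeasure := by
      rw [hφstarint μ₀, hφstarint ν.1, ← Finset.sum_sub_distrib]
      apply Finset.sum_congr rfl
      intro i _
      simp only [hTdef]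
      ring
    rw [h3] at h2
    linarith
  have hJle : (⨆ ν : Q, ∫ x, φstar x ∂ν.1.toMeasure) ≤ ∫ x, φstar x ∂μ₀.toMeasure - c' :=
    ciSup_le fun ν => (hfinal ν).le
  have hbddc : BddAbove (Set.range fun φ : {φ : BoundedContinuousFunction X ℝ // ‖φ‖ ≤ 1} =>
      ∫ x, φ.1 x ∂μ₀.toMeasure - ⨆ ν : Q, ∫ x, φ.1 x ∂ν.1.toMeasure) := by
    apply bddAbove_range_of_le (c := 2)
    intro φ
    have h1 := (abs_le.mp (abs_integral_le_one μ₀.toMeasure φ.2)).2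
    have h2 : (-1 : ℝ) ≤ ⨆ ν : Q, ∫ x, φ.1 x ∂ν.1.toMeasure := by
      obtain ⟨ν⟩ := (inferInstance : Nonempty ↥Q)
      exact le_trans (abs_le.mp (abs_integral_le_one _ φ.2)).1 (le_ciSup (hJbdd φ) ν)
    linarith
  have hcge : (∫ x, φstar x ∂μ₀.toMeasure - ⨆ ν : Q, ∫ x, φstar x ∂ν.1.toMeasure) ≤ c :=
    le_ciSup hbddc ⟨φstar, hφstarnorm⟩
  have : c' ≤ c := le_trans (by linarith) hcge
  linarith

end GenVAux

namespace GenVAux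

open BoundedContinuousFunction MeasureTheory

variable {X : Type*} [MeasurableSpace X] [TopologicalSpace X] [PolishSpace X] [BorelSpace X]

lemma half (P Q : Set (ProbabilityMeasure X)) (hPne : P.Nonempty) (hQne : Q.Nonempty)
    (hQc : IsCompact Q) (hQconv : ConvexPM Q) :
    2 * (⨆ μ : P, ⨅ ν : Q, tvDist μ.1.toMeasure ν.1.toMeasure)
      = ⨆ φ : {φ : BoundedContinuousFunction X ℝ // ‖φ‖ ≤ 1},
        ((⨆ μ : P, ∫ x, φ.1 x ∂μ.1.toMeasure) - (⨆ ν : Q, ∫ x, φ.1 x ∂ν.1.toMeasure)) := by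
  haveI : Nonempty ↥P := hPne.to_subtype
  haveI : Nonempty ↥Q := hQne.to_subtype
  have hIbddP : ∀ φ : {φ : BoundedContinuousFunction X ℝ // ‖φ‖ ≤ 1},
      BddAbove (Set.range fun μ : P => ∫ x, φ.1 x ∂μ.1.toMeasure) :=
    fun φ => bddAbove_range_of_le fun μ => (abs_le.mp (abs_integral_le_one _ φ.2)).2
  have hIbddQ : ∀ φ : {φ : BoundedContinuousFunction X ℝ // ‖φ‖ ≤ 1},
      BddAbove (Set.range fun ν : Q => ∫ x, φ.1 x ∂ν.1.toMeasure) :=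
    fun φ => bddAbove_range_of_le fun ν => (abs_le.mp (abs_integral_le_one _ φ.2)).2
  have hIPle : ∀ φ : {φ : BoundedContinuousFunction X ℝ // ‖φ‖ ≤ 1},
      (⨆ μ : P, ∫ x, φ.1 x ∂μ.1.toMeasure) ≤ 1 :=
    fun φ => ciSup_le fun μ => (abs_le.mp (abs_integral_le_one _ φ.2)).2
  have hIQge : ∀ φ : {φ : BoundedContinuousFunction X ℝ // ‖φ‖ ≤ 1},
      (-1 : ℝ) ≤ ⨆ ν : Q, ∫ x, φ.1 x ∂ν.1.toMeasure :=
    fun φ => le_trans (abs_le.mp (abs_integral_le_one _ φ.2)).1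
      (le_ciSup (hIbddQ φ) (Classical.arbitrary _))
  have hRHSbdd : BddAbove (Set.range fun φ : {φ : BoundedContinuousFunction X ℝ // ‖φ‖ ≤ 1} =>
      (⨆ μ : P, ∫ x, φ.1 x ∂μ.1.toMeasure) - (⨆ ν : Q, ∫ x, φ.1 x ∂ν.1.toMeasure)) := by
    apply bddAbove_range_of_le (c := 2)
    intro φ
    have := hIPle φ
    have := hIQge φ
    linarith
  have htv_bddbelow : ∀ μ : P, BddBelow (Set.range fun ν : Q =>
      tvDist μ.1.toMeasure ν.1.toMeasure) :=
    fun μ => bddBelow_range_of_le fun ν => tv_nonneg _ _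
  have hW_bdd : BddAbove (Set.range fun μ : P => ⨅ ν : Q,
      tvDist μ.1.toMeasure ν.1.toMeasure) :=
    bddAbove_range_of_le fun μ =>
      (ciInf_le (htv_bddbelow μ) (Classical.arbitrary _)).trans (tv_le_one _ _)
  apply le_antisymm
  · have h : (⨆ μ : P, ⨅ ν : Q, tvDist μ.1.toMeasure ν.1.toMeasure)
        ≤ (⨆ φ : {φ : BoundedContinuousFunction X ℝ // ‖φ‖ ≤ 1},
          ((⨆ μ : P, ∫ x, φ.1 x ∂μ.1.toMeasure) - ⨆ ν : Q, ∫ x, φ.1 x ∂ν.1.toMeasure)) / 2 := by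
      apply ciSup_le
      intro μ
      have h1 : (⨅ ν : Q, tvDist μ.1.toMeasure ν.1.toMeasure)
          ≤ (⨅ ν : Q, Dfun μ.1.toMeasure ν.1.toMeasure) / 2 := by
        rw [le_div_iff₀ (by norm_num : (0:ℝ) < 2)]
        apply le_ciInf
        intro ν
        have h := ciInf_le (htv_bddbelow μ) ν
        rw [Dfun_eq]
        linarith
      have h2 := minimax μ.1 Q hQne hQc hQconv
      have h3 : (⨆ φ : {φ : BoundedContinuousFunction X ℝ // ‖φ‖ ≤ 1},
            (∫ x, φ.1 x ∂μ.1.toMeasure - ⨆ ν : Q, ∫ x, φ.1 x ∂ν.1.toMeasure))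
          ≤ ⨆ φ : {φ : BoundedContinuousFunction X ℝ // ‖φ‖ ≤ 1},
            ((⨆ μ' : P, ∫ x, φ.1 x ∂μ'.1.toMeasure) - ⨆ ν : Q, ∫ x, φ.1 x ∂ν.1.toMeasure) := by
        apply ciSup_le
        intro φ
        have ha : ∫ x, φ.1 x ∂μ.1.toMeasure ≤ ⨆ μ' : P, ∫ x, φ.1 x ∂μ'.1.toMeasure :=
          le_ciSup (hIbddP φ) μ
        have hb := le_ciSup hRHSbdd φ
        linarith
      linarith
    linarith
  · apply ciSup_le
    intro φ
    have h : ∀ μ : P, ∫ x, φ.1 x ∂μ.1.toMeasure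
        ≤ 2 * (⨆ μ' : P, ⨅ ν : Q, tvDist μ'.1.toMeasure ν.1.toMeasure)
          + ⨆ ν : Q, ∫ x, φ.1 x ∂ν.1.toMeasure := by
      intro μ
      have h1 : (∫ x, φ.1 x ∂μ.1.toMeasure - ⨆ ν : Q, ∫ x, φ.1 x ∂ν.1.toMeasure) / 2
          ≤ ⨅ ν : Q, tvDist μ.1.toMeasure ν.1.toMeasure := by
        apply le_ciInf
        intro ν
        have ha := integral_sub_le_two_tv μ.1.toMeasure ν.1.toMeasure φ.2
        have hb : ∫ x, φ.1 x ∂ν.1.toMeasure ≤ ⨆ ν' : Q, ∫ x, φ.1 x ∂ν'.1.toMeasure :=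
          le_ciSup (hIbddQ φ) ν
        linarith
      have h2 : (⨅ ν : Q, tvDist μ.1.toMeasure ν.1.toMeasure)
          ≤ ⨆ μ' : P, ⨅ ν : Q, tvDist μ'.1.toMeasure ν.1.toMeasure :=
        le_ciSup hW_bdd μ
      linarith
    have := ciSup_le h
    linarith

end GenVAux

theorem genV_duality {X : Type*} [MeasurableSpace X] [TopologicalSpace X]
    [PolishSpace X] [BorelSpace X] (P Q : Set (ProbabilityMeasure X))
    (hPne : P.Nonempty) (hQne : Q.Nonempty) (hPc : IsCompact P) (hQc : IsCompact Q)
    (hPconv : ConvexPM P) (hQconv : ConvexPM Q) :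
    genV P Q = (1/2) * ⨆ φ : {φ : BoundedContinuousFunction X ℝ // ‖φ‖ ≤ 1},
      |(⨆ μ : P, ∫ x, φ.1 x ∂μ.1.toMeasure) - (⨆ ν : Q, ∫ x, φ.1 x ∂ν.1.toMeasure)| := by
  haveI : Nonempty ↥P := hPne.to_subtype
  haveI : Nonempty ↥Q := hQne.to_subtype
  set F : {φ : BoundedContinuousFunction X ℝ // ‖φ‖ ≤ 1} → ℝ := fun φ =>
    (⨆ μ : P, ∫ x, φ.1 x ∂μ.1.toMeasure) - (⨆ ν : Q, ∫ x, φ.1 x ∂ν.1.toMeasure) with hFdef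
  have hIbddP : ∀ φ : {φ : BoundedContinuousFunction X ℝ // ‖φ‖ ≤ 1},
      BddAbove (Set.range fun μ : P => ∫ x, φ.1 x ∂μ.1.toMeasure) :=
    fun φ => GenVAux.bddAbove_range_of_le fun μ =>
      (abs_le.mp (GenVAux.abs_integral_le_one _ φ.2)).2
  have hIbddQ : ∀ φ : {φ : BoundedContinuousFunction X ℝ // ‖φ‖ ≤ 1},
      BddAbove (Set.range fun ν : Q => ∫ x, φ.1 x ∂ν.1.toMeasure) :=
    fun φ => GenVAux.bddAbove_range_of_le fun ν =>
      (abs_le.mp (GenVAux.abs_integral_le_one _ φ.2)).2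
  have hFabs : ∀ φ, |F φ| ≤ 2 := by
    intro φ
    simp only [hFdef]
    have h1 : |⨆ μ : P, ∫ x, φ.1 x ∂μ.1.toMeasure| ≤ 1 := by
      rw [abs_le]
      constructor
      · exact le_trans (abs_le.mp (GenVAux.abs_integral_le_one _ φ.2)).1
          (le_ciSup (hIbddP φ) (Classical.arbitrary _))
      · exact ciSup_le fun μ => (abs_le.mp (GenVAux.abs_integral_le_one _ φ.2)).2
    have h2 : |⨆ ν : Q, ∫ x, φ.1 x ∂ν.1.toMeasure| ≤ 1 := by
      rw [abs_le]
      constructor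
      · exact le_trans (abs_le.mp (GenVAux.abs_integral_le_one _ φ.2)).1
          (le_ciSup (hIbddQ φ) (Classical.arbitrary _))
      · exact ciSup_le fun ν => (abs_le.mp (GenVAux.abs_integral_le_one _ φ.2)).2
    calc |(⨆ μ : P, ∫ x, φ.1 x ∂μ.1.toMeasure) - (⨆ ν : Q, ∫ x, φ.1 x ∂ν.1.toMeasure)|
        ≤ |⨆ μ : P, ∫ x, φ.1 x ∂μ.1.toMeasure| + |⨆ ν : Q, ∫ x, φ.1 x ∂ν.1.toMeasure| :=
          abs_sub _ _
      _ ≤ 2 := by linarith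
  have habsbdd : BddAbove (Set.range fun φ => |F φ|) :=
    GenVAux.bddAbove_range_of_le hFabs
  have hFbdd : BddAbove (Set.range F) :=
    GenVAux.bddAbove_range_of_le fun φ => (le_abs_self _).trans (hFabs φ)
  have hnFbdd : BddAbove (Set.range fun φ => -F φ) :=
    GenVAux.bddAbove_range_of_le fun φ => (neg_le_abs (F φ)).trans (hFabs φ)
  have key : (⨆ φ, |F φ|) = max (⨆ φ, F φ) (⨆ φ, -F φ) := by
    apply le_antisymm
    · apply ciSup_le
      intro φ
      rcases abs_cases (F φ) with ⟨heq, _⟩ | ⟨heq, _⟩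
      · rw [heq]
        exact le_max_of_le_left (le_ciSup hFbdd φ)
      · rw [heq]
        exact le_max_of_le_right (le_ciSup hnFbdd φ)
    · apply max_le
      · exact ciSup_le fun φ => (le_abs_self _).trans (le_ciSup habsbdd φ)
      · exact ciSup_le fun φ => (neg_le_abs _).trans (le_ciSup habsbdd φ)
  have h1 := GenVAux.half P Q hPne hQne hQc hQconv
  have h2 := GenVAux.half Q P hQne hPne hPc hPconv
  have hcomm : (⨆ ν : Q, ⨅ μ : P, tvDist μ.1.toMeasure ν.1.toMeasure)
      = ⨆ ν : Q, ⨅ μ : P, tvDist ν.1.toMeasure μ.1.toMeasure := by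
    congr 1
    funext ν
    congr 1
    funext μ
    exact GenVAux.tv_comm _ _
  have h2' : 2 * (⨆ ν : Q, ⨅ μ : P, tvDist μ.1.toMeasure ν.1.toMeasure) = ⨆ φ, -F φ := by
    rw [hcomm, h2]
    congr 1
    funext φ
    simp only [hFdef]
    ring
  show max (⨆ μ : P, ⨅ ν : Q, tvDist μ.1.toMeasure ν.1.toMeasure)
      (⨆ ν : Q, ⨅ μ : P, tvDist μ.1.toMeasure ν.1.toMeasure) = (1/2) * ⨆ φ, |F φ|
  rw [key, ← h1, ← h2']
  rw [mul_max_of_nonneg _ _ (by norm_num : (0:ℝ) ≤ 1/2)]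
  congr 1 <;> ring
end
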